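/- Let k₁ and k₂ be relatively prime positive integers. The map φ : ℝ → H³(ℝ) × SU(2) defined by φ(t) = (U(0, 0, k₂t), diag(e^{-2πik₁t}, e^{2πik₁t})) is an injective continuous group homomorphism that is a homeomorphism onto its image, and its image equals the connected component of the identity of the closed subgroup H = { (U(a, b, c + k₂t), diag(e^{-2πik₁t}, e^{2πik₁t})) : a, b, c ∈ ℤ, t ∈ ℝ }. -/

import Mathlib

/-- The Heisenberg group over a commutative ring `R`: elements `U(x,y,z)` (upper unitriangular
3×3 matrices `[[1,x,z],[0,1,y],[0,0,1]]`) with the matrix multiplication law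
`U(x,y,z)·U(x',y',z') = U(x+x', y+y', z+z'+x·y')`. -/
@[ext]
structure Heis (R : Type*) [CommRing R] where
  x : R
  y : R
  z : R

namespace Heis

variable {R : Type*} [CommRing R]

instance : Mul (Heis R) := ⟨fun a b => ⟨a.x + b.x, a.y + b.y, a.z + b.z + a.x * b.y⟩⟩
instance : One (Heis R) := ⟨⟨0, 0, 0⟩⟩
instance : Inv (Heis R) := ⟨fun a => ⟨-a.x, -a.y, -a.z + a.x * a.y⟩⟩

@[simp] theorem mul_x (a b : Heis R) : (a * b).x = a.x + b.x := rfl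
@[simp] theorem mul_y (a b : Heis R) : (a * b).y = a.y + b.y := rfl
@[simp] theorem mul_z (a b : Heis R) : (a * b).z = a.z + b.z + a.x * b.y := rfl
@[simp] theorem one_x : (1 : Heis R).x = 0 := rfl
@[simp] theorem one_y : (1 : Heis R).y = 0 := rfl
@[simp] theorem one_z : (1 : Heis R).z = 0 := rfl
@[simp] theorem inv_x (a : Heis R) : (a⁻¹).x = -a.x := rfl
@[simp] theorem inv_y (a : Heis R) : (a⁻¹).y = -a.y := rfl
@[simp] theorem inv_z (a : Heis R) : (a⁻¹).z = -a.z + a.x * a.y := rfl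

instance : Group (Heis R) where
  mul := (· * ·)
  one := 1
  inv := (·⁻¹)
  mul_assoc a b c := by ext <;> simp <;> ring
  one_mul a := by ext <;> simp
  mul_one a := by ext <;> simp
  inv_mul_cancel a := by ext <;> simp <;> ring

@[simp] theorem mk_mul (a b c a' b' c' : R) :
    (⟨a, b, c⟩ * ⟨a', b', c'⟩ : Heis R) = ⟨a + a', b + b', c + c' + a * b'⟩ := rfl

theorem one_def : (1 : Heis R) = ⟨0, 0, 0⟩ := rfl

@[simp] theorem mk_inv (a b c : R) : (⟨a, b, c⟩ : Heis R)⁻¹ = ⟨-a, -b, -c + a * b⟩ := rfl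

end Heis

/-- The standard topology on `H³(ℝ)`, i.e. the topology induced from the space of
3×3 real matrices (equivalently, from the matrix entries `(x, y, z)`). -/
instance : TopologicalSpace (Heis ℝ) :=
  TopologicalSpace.induced (fun h => (h.x, h.y, h.z)) inferInstance

/-- `SU(2)`: the group of 2×2 complex special unitary matrices (unitary matrices of
determinant 1), as a subgroup of the unitary group. -/
def SU2 : Subgroup (Matrix.unitaryGroup (Fin 2) ℂ) where
  carrier := {A | (A : Matrix (Fin 2) (Fin 2) ℂ).det = 1}
  one_mem' := by simp
  mul_mem' {a b} ha hb := by
    simp only [Set.mem_setOf_eq, Matrix.UnitaryGroup.mul_val, Matrix.det_mul] at *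
    rw [ha, hb, mul_one]
  inv_mem' {a} ha := by
    simp only [Set.mem_setOf_eq, Matrix.UnitaryGroup.inv_val] at *
    show (star (a : Matrix (Fin 2) (Fin 2) ℂ)).det = 1
    rw [Matrix.star_eq_conjTranspose, Matrix.det_conjTranspose, ha, star_one]

/-- The element `diag(e^{-iθ}, e^{iθ})` of `SU(2)`. -/
noncomputable def su2diag (θ : ℝ) : SU2 := by
  refine ⟨⟨Matrix.diagonal
      ![Complex.exp (-(θ : ℂ) * Complex.I), Complex.exp ((θ : ℂ) * Complex.I)], ?_⟩, ?_⟩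
  · rw [Matrix.mem_unitaryGroup_iff, Matrix.star_eq_conjTranspose,
      Matrix.diagonal_conjTranspose, Matrix.diagonal_mul_diagonal]
    have hv : (fun i => ![Complex.exp (-(θ : ℂ) * Complex.I), Complex.exp ((θ : ℂ) * Complex.I)] i *
        star ![Complex.exp (-(θ : ℂ) * Complex.I), Complex.exp ((θ : ℂ) * Complex.I)] i) =
        (1 : Fin 2 → ℂ) := by
      funext i
      fin_cases i <;>
        simp [Complex.star_def, ← Complex.exp_conj, ← Complex.exp_add]
    rw [hv]
    exact Matrix.diagonal_one
  · show (Matrix.diagonal _).det = 1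
    rw [Matrix.det_diagonal, Fin.prod_univ_two]
    simp only [Matrix.cons_val_zero, Matrix.cons_val_one, Matrix.head_cons, ← Complex.exp_add]
    ring_nf
    exact Complex.exp_zero

/-- The subset `H = { (U(a,b,c+k₂t), diag(e^{-2πik₁t}, e^{2πik₁t})) : a,b,c ∈ ℤ, t ∈ ℝ }`
of `H³(ℝ) × SU(2)`. -/
noncomputable def Hset (k₁ k₂ : ℕ) : Set (Heis ℝ × SU2) :=
  {p | ∃ (a b c : ℤ) (t : ℝ),
    p = (⟨(a : ℝ), (b : ℝ), (c : ℝ) + (k₂ : ℝ) * t⟩, su2diag (2 * Real.pi * (k₁ : ℝ) * t))}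


open Matrix Complex in
theorem su2diag_val (θ : ℝ) :
    ((su2diag θ : SU2) : Matrix.unitaryGroup (Fin 2) ℂ).val =
      Matrix.diagonal ![Complex.exp (-(θ : ℂ) * Complex.I), Complex.exp ((θ : ℂ) * Complex.I)] :=
  rfl

theorem su2diag_add (a b : ℝ) : su2diag (a + b) = su2diag a * su2diag b := by
  apply Subtype.ext; apply Subtype.ext
  show (su2diag (a+b) : Matrix.unitaryGroup (Fin 2) ℂ).val =
    (su2diag a : Matrix.unitaryGroup (Fin 2) ℂ).val * (su2diag b : Matrix.unitaryGroup (Fin 2) ℂ).val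
  rw [su2diag_val, su2diag_val, su2diag_val, Matrix.diagonal_mul_diagonal]
  have : (fun i => ![Complex.exp (-(a : ℂ) * Complex.I), Complex.exp ((a : ℂ) * Complex.I)] i *
      ![Complex.exp (-(b : ℂ) * Complex.I), Complex.exp ((b : ℂ) * Complex.I)] i) =
      ![Complex.exp (-((a + b : ℝ) : ℂ) * Complex.I), Complex.exp (((a + b : ℝ) : ℂ) * Complex.I)] := by
    funext i
    fin_cases i
    · show Complex.exp (-(a : ℂ) * Complex.I) * Complex.exp (-(b : ℂ) * Complex.I) =
        Complex.exp (-((a + b : ℝ) : ℂ) * Complex.I)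
      rw [← Complex.exp_add]
      congr 1
      push_cast
      ring
    · show Complex.exp ((a : ℂ) * Complex.I) * Complex.exp ((b : ℂ) * Complex.I) =
        Complex.exp (((a + b : ℝ) : ℂ) * Complex.I)
      rw [← Complex.exp_add]
      congr 1
      push_cast
      ring
  rw [this]

theorem su2diag_zero : su2diag 0 = 1 := by
  apply Subtype.ext; apply Subtype.ext
  show (su2diag 0 : Matrix.unitaryGroup (Fin 2) ℂ).val = 1
  rw [su2diag_val]
  have : ![Complex.exp (-((0:ℝ) : ℂ) * Complex.I), Complex.exp (((0:ℝ):ℂ) * Complex.I)] =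
      (1 : Fin 2 → ℂ) := by
    funext i; fin_cases i <;> simp
  rw [this]; exact Matrix.diagonal_one

theorem su2diag_eq_one_iff (θ : ℝ) : su2diag θ = 1 ↔ ∃ n : ℤ, θ = n * (2 * Real.pi) := by
  constructor
  · intro h
    have h1 : (su2diag θ : Matrix.unitaryGroup (Fin 2) ℂ).val 1 1 =
        ((1 : SU2) : Matrix.unitaryGroup (Fin 2) ℂ).val 1 1 := by rw [h]
    rw [su2diag_val] at h1
    simp [Matrix.diagonal_apply_eq] at h1
    rw [Complex.exp_eq_one_iff] at h1
    obtain ⟨n, hn⟩ := h1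
    refine ⟨n, ?_⟩
    have h2 : (θ : ℂ) * Complex.I = ((n : ℂ) * (2 * (Real.pi : ℂ))) * Complex.I := by
      rw [hn]; ring
    have h3 := mul_right_cancel₀ Complex.I_ne_zero h2
    exact_mod_cast h3
  · rintro ⟨n, rfl⟩
    apply Subtype.ext; apply Subtype.ext
    show (su2diag _ : Matrix.unitaryGroup (Fin 2) ℂ).val = 1
    rw [su2diag_val]
    have key : ∀ m : ℤ, Complex.exp (((m : ℂ)) * (2 * Real.pi * Complex.I)) = 1 :=
      Complex.exp_int_mul_two_pi_mul_I
    have : ![Complex.exp (-(((n : ℝ) * (2 * Real.pi) : ℝ) : ℂ) * Complex.I),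
        Complex.exp ((((n : ℝ) * (2 * Real.pi) : ℝ) : ℂ) * Complex.I)] = (1 : Fin 2 → ℂ) := by
      funext i
      fin_cases i
      · show Complex.exp (-(((n : ℝ) * (2 * Real.pi) : ℝ) : ℂ) * Complex.I) = 1
        rw [show (-(((n : ℝ) * (2 * Real.pi) : ℝ) : ℂ) * Complex.I) =
          ((-n : ℤ) : ℂ) * (2 * Real.pi * Complex.I) by push_cast; ring]
        exact key _
      · show Complex.exp ((((n : ℝ) * (2 * Real.pi) : ℝ) : ℂ) * Complex.I) = 1
        rw [show ((((n : ℝ) * (2 * Real.pi) : ℝ) : ℂ) * Complex.I) =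
          ((n : ℤ) : ℂ) * (2 * Real.pi * Complex.I) by push_cast; ring]
        exact key _
    rw [this]; exact Matrix.diagonal_one

theorem continuous_su2diag : Continuous su2diag := by
  apply Continuous.subtype_mk
  apply Continuous.subtype_mk
  apply Continuous.matrix_diagonal
  apply continuous_pi
  intro i
  fin_cases i <;> simp <;> fun_prop

theorem su2diag_inv (a : ℝ) : (su2diag a)⁻¹ = su2diag (-a) := by
  rw [eq_comm, eq_inv_iff_mul_eq_one, ← su2diag_add]
  simp [su2diag_zero]

theorem su2diag_sub (a b : ℝ) : su2diag a * (su2diag b)⁻¹ = su2diag (a - b) := by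
  rw [su2diag_inv, ← su2diag_add]; ring_nf

theorem su2diag_period (x : ℝ) (n : ℤ) : su2diag (x + n * (2 * Real.pi)) = su2diag x := by
  rw [su2diag_add, (su2diag_eq_one_iff _).2 ⟨n, rfl⟩, mul_one]

instance : IsTopologicalGroup (Matrix.unitaryGroup (Fin 2) ℂ) where
  continuous_inv := by
    rw [continuous_induced_rng]
    have : (Subtype.val ∘ fun a : Matrix.unitaryGroup (Fin 2) ℂ => a⁻¹) =
        (fun a : Matrix.unitaryGroup (Fin 2) ℂ => star (a : Matrix (Fin 2) (Fin 2) ℂ)) := by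
      funext a; exact Matrix.UnitaryGroup.inv_val a
    rw [this]
    exact continuous_star.comp continuous_subtype_val

theorem continuous_heis_triple : Continuous fun h : Heis ℝ => (h.x, h.y, h.z) :=
  continuous_induced_dom

theorem continuous_heis_z : Continuous fun h : Heis ℝ => h.z :=
  (continuous_snd.comp (continuous_snd.comp continuous_heis_triple))

theorem continuous_heis_x : Continuous fun h : Heis ℝ => h.x :=
  (continuous_fst.comp continuous_heis_triple)

theorem continuous_heis_y : Continuous fun h : Heis ℝ => h.y :=
  ((continuous_fst.comp continuous_snd).comp continuous_heis_triple)

open Topology in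
/-- Let `k₁, k₂` be relatively prime positive integers. The map `φ : ℝ → H³(ℝ) × SU(2)`,
`φ(t) = (U(0,0,k₂t), diag(e^{-2πik₁t}, e^{2πik₁t}))`, is an injective continuous group
homomorphism which is a homeomorphism onto its image, and its image is the identity
component of the closed subgroup `H`. -/
theorem phi_embedding_identity_component (k₁ k₂ : ℕ) (hk₁ : 0 < k₁) (hk₂ : 0 < k₂)
    (hcop : Nat.Coprime k₁ k₂)
    (φ : ℝ → Heis ℝ × SU2)
    (hφ : ∀ t : ℝ, φ t = (⟨0, 0, (k₂ : ℝ) * t⟩, su2diag (2 * Real.pi * (k₁ : ℝ) * t))) :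
    (∀ s t : ℝ, φ (s + t) = φ s * φ t) ∧
    Function.Injective φ ∧
    Continuous φ ∧
    IsEmbedding φ ∧
    ∀ H : Subgroup (Heis ℝ × SU2), (H : Set (Heis ℝ × SU2)) = Hset k₁ k₂ →
      IsClosed (H : Set (Heis ℝ × SU2)) →
      Set.range φ = Subtype.val '' connectedComponent (1 : H) := by
  have hk₂' : (k₂ : ℝ) ≠ 0 := Nat.cast_ne_zero.2 hk₂.ne'
  have hφeq : φ = fun t => (⟨0, 0, (k₂ : ℝ) * t⟩, su2diag (2 * Real.pi * (k₁ : ℝ) * t)) :=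
    funext hφ
  subst hφeq
  -- homomorphism
  have hom : ∀ s t : ℝ, (fun t => ((⟨0, 0, (k₂ : ℝ) * t⟩ : Heis ℝ),
      su2diag (2 * Real.pi * (k₁ : ℝ) * t))) (s + t) =
      (fun t => ((⟨0, 0, (k₂ : ℝ) * t⟩ : Heis ℝ), su2diag (2 * Real.pi * (k₁ : ℝ) * t))) s *
      (fun t => ((⟨0, 0, (k₂ : ℝ) * t⟩ : Heis ℝ), su2diag (2 * Real.pi * (k₁ : ℝ) * t))) t := by
    intro s t
    refine Prod.ext ?_ ?_
    · show (⟨0, 0, (k₂ : ℝ) * (s + t)⟩ : Heis ℝ) = ⟨0, 0, (k₂ : ℝ) * s⟩ * ⟨0, 0, (k₂ : ℝ) * t⟩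
      rw [Heis.mk_mul]
      ext <;> simp <;> ring
    · show su2diag _ = su2diag _ * su2diag _
      rw [← su2diag_add]
      congr 1
      ring
  have hcont : Continuous (fun t : ℝ => ((⟨0, 0, (k₂ : ℝ) * t⟩ : Heis ℝ),
      su2diag (2 * Real.pi * (k₁ : ℝ) * t))) := by
    refine Continuous.prodMk ?_ (continuous_su2diag.comp (by fun_prop))
    rw [continuous_induced_rng]
    show Continuous fun t : ℝ => ((0:ℝ), (0:ℝ), (k₂ : ℝ) * t)
    fun_prop
  have hemb : IsEmbedding (fun t : ℝ => ((⟨0, 0, (k₂ : ℝ) * t⟩ : Heis ℝ),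
      su2diag (2 * Real.pi * (k₁ : ℝ) * t))) := by
    have hg : Continuous fun p : Heis ℝ × SU2 => p.1.z / (k₂ : ℝ) :=
      (continuous_heis_z.comp continuous_fst).div_const _
    refine IsEmbedding.of_comp hcont hg ?_
    have : ((fun p : Heis ℝ × SU2 => p.1.z / (k₂ : ℝ)) ∘
        (fun t : ℝ => ((⟨0, 0, (k₂ : ℝ) * t⟩ : Heis ℝ),
          su2diag (2 * Real.pi * (k₁ : ℝ) * t)))) = id := by
      funext t
      show (k₂ : ℝ) * t / (k₂ : ℝ) = t
      rw [mul_comm, mul_div_assoc, div_self hk₂', mul_one]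
    rw [this]
    exact IsEmbedding.id
  refine ⟨hom, ?_, ?_, ?_, ?_⟩
  -- injective
  · intro s t h
    have hz : (k₂ : ℝ) * s = (k₂ : ℝ) * t := congrArg (fun p => p.1.z) h
    exact mul_left_cancel₀ hk₂' hz
  -- continuous
  · exact hcont
  · exact hemb
  · intro H hH hHclosed
    have hπ2 : (2 * Real.pi : ℝ) ≠ 0 := by positivity
    have hcopZ : IsCoprime ((k₂ : ℤ)) ((k₁ : ℤ)) := hcop.symm.isCoprime
    have hφ1 : (fun t : ℝ => ((⟨0, 0, (k₂ : ℝ) * t⟩ : Heis ℝ),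
        su2diag (2 * Real.pi * (k₁ : ℝ) * t))) 0 = 1 := by
      refine Prod.ext ?_ ?_
      · show (⟨0, 0, (k₂ : ℝ) * 0⟩ : Heis ℝ) = 1
        rw [Heis.one_def, mul_zero]
      · show su2diag (2 * Real.pi * (k₁ : ℝ) * 0) = 1
        rw [mul_zero, su2diag_zero]
    have hmemH : ∀ t : ℝ, ((⟨0, 0, (k₂ : ℝ) * t⟩ : Heis ℝ),
        su2diag (2 * Real.pi * (k₁ : ℝ) * t)) ∈ H := by
      intro t
      have : ((⟨0, 0, (k₂ : ℝ) * t⟩ : Heis ℝ),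
          su2diag (2 * Real.pi * (k₁ : ℝ) * t)) ∈ (H : Set (Heis ℝ × SU2)) := by
        rw [hH]
        refine ⟨0, 0, 0, t, ?_⟩
        refine Prod.ext ?_ rfl
        show (⟨0, 0, (k₂ : ℝ) * t⟩ : Heis ℝ) = ⟨((0:ℤ):ℝ), ((0:ℤ):ℝ), ((0:ℤ):ℝ) + (k₂:ℝ) * t⟩
        ext <;> simp
      exact this
    -- the "bad" finite set in SU2
    set Tbad : Set SU2 := (fun j : ℕ => su2diag (2 * Real.pi * (j : ℝ) / (k₂ : ℝ))) ''
      {j : ℕ | 0 < j ∧ j < k₂} with hTbadDef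
    have hTbadFin : Tbad.Finite :=
      Set.Finite.image _ ((Set.finite_Iio k₂).subset fun j hj => hj.2)
    have h1nT : (1 : SU2) ∉ Tbad := by
      rintro ⟨j, ⟨hj0, hjk⟩, hj⟩
      rw [su2diag_eq_one_iff] at hj
      obtain ⟨n, hn⟩ := hj
      rw [div_eq_iff hk₂'] at hn
      have hj' : (j : ℝ) = (n : ℝ) * (k₂ : ℝ) := by
        have h2 : 2 * Real.pi * (j : ℝ) = 2 * Real.pi * ((n : ℝ) * (k₂ : ℝ)) := by
          linear_combination hn
        exact mul_left_cancel₀ hπ2 h2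
      have hjz : (j : ℤ) = n * (k₂ : ℤ) := by exact_mod_cast hj'
      have hj0' : (0 : ℤ) < (j : ℤ) := by exact_mod_cast hj0
      have hjk' : (j : ℤ) < (k₂ : ℤ) := by exact_mod_cast hjk
      have hk₂Z : (0 : ℤ) < (k₂ : ℤ) := by positivity
      rcases le_or_gt n 0 with h | h
      · have : n * (k₂ : ℤ) ≤ 0 := mul_nonpos_of_nonpos_of_nonneg h hk₂Z.le
        linarith
      · have : (k₂ : ℤ) ≤ n * (k₂ : ℤ) := le_mul_of_one_le_left hk₂Z.le h
        linarith
    -- key divisibility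
    have hdvd : ∀ c : ℤ, su2diag (2 * Real.pi * (k₁ : ℝ) * (c : ℝ) / (k₂ : ℝ)) ∉ Tbad →
        (k₂ : ℤ) ∣ c := by
      intro c hc
      by_contra hndvd
      apply hc
      set m : ℤ := ((k₁ : ℤ) * c) % (k₂ : ℤ) with hm
      have hk₂Z : (0 : ℤ) < (k₂ : ℤ) := by exact_mod_cast hk₂
      have hm0 : 0 ≤ m := Int.emod_nonneg _ hk₂Z.ne'
      have hmlt : m < (k₂ : ℤ) := Int.emod_lt_of_pos _ hk₂Z
      have hmne : m ≠ 0 := by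
        intro h0
        exact hndvd (hcopZ.dvd_of_dvd_mul_left (Int.dvd_of_emod_eq_zero h0))
      refine ⟨m.toNat, ⟨by omega, by omega⟩, ?_⟩
      have hdm : (k₂ : ℤ) * (((k₁ : ℤ) * c) / (k₂ : ℤ)) + m = (k₁ : ℤ) * c :=
        Int.mul_ediv_add_emod _ _
      have hR : ((k₂ : ℝ)) * (((((k₁ : ℤ) * c) / (k₂ : ℤ) : ℤ)) : ℝ) + (m : ℝ)
          = (k₁ : ℝ) * (c : ℝ) := by exact_mod_cast hdm
      have hmt : ((m.toNat : ℕ) : ℝ) = (m : ℝ) := by exact_mod_cast Int.toNat_of_nonneg hm0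
      have harg : 2 * Real.pi * (k₁ : ℝ) * (c : ℝ) / (k₂ : ℝ) =
          2 * Real.pi * ((m.toNat : ℕ) : ℝ) / (k₂ : ℝ) +
            ((((k₁ : ℤ) * c) / (k₂ : ℤ) : ℤ) : ℝ) * (2 * Real.pi) := by
        rw [hmt]
        field_simp
        linear_combination (-1) * hR
      show su2diag _ = su2diag _
      rw [harg, su2diag_period]
    -- key: a point of Hset with x = 0, y = 0 and good SU2-part lies in the range
    have hrange : ∀ p : Heis ℝ × SU2, p ∈ Hset k₁ k₂ → p.1.x = 0 → p.1.y = 0 →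
        su2diag (2 * Real.pi * (k₁ : ℝ) * p.1.z / (k₂ : ℝ)) * p.2⁻¹ ∉ Tbad →
        p ∈ Set.range (fun t : ℝ => ((⟨0, 0, (k₂ : ℝ) * t⟩ : Heis ℝ),
          su2diag (2 * Real.pi * (k₁ : ℝ) * t))) := by
      rintro p ⟨a, b, c, t, rfl⟩ hx hy hF
      have ha : (a : ℝ) = 0 := hx
      have hb : (b : ℝ) = 0 := hy
      have hF3 : su2diag (2 * Real.pi * (k₁ : ℝ) * ((c : ℝ) + (k₂ : ℝ) * t) / (k₂ : ℝ)) *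
          (su2diag (2 * Real.pi * (k₁ : ℝ) * t))⁻¹ =
          su2diag (2 * Real.pi * (k₁ : ℝ) * (c : ℝ) / (k₂ : ℝ)) := by
        rw [su2diag_sub]
        congr 1
        field_simp
        ring
      have hF' : su2diag (2 * Real.pi * (k₁ : ℝ) * ((c : ℝ) + (k₂ : ℝ) * t) / (k₂ : ℝ)) *
          (su2diag (2 * Real.pi * (k₁ : ℝ) * t))⁻¹ ∉ Tbad := hF
      have hc : su2diag (2 * Real.pi * (k₁ : ℝ) * (c : ℝ) / (k₂ : ℝ)) ∉ Tbad := by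
        rw [← hF3]; exact hF'
      obtain ⟨d, rfl⟩ := hdvd c hc
      refine ⟨t + (d : ℝ), ?_⟩
      refine Prod.ext ?_ ?_
      · show (⟨0, 0, (k₂ : ℝ) * (t + (d : ℝ))⟩ : Heis ℝ) = _
        ext
        · exact ha.symm
        · exact hb.symm
        · show (k₂ : ℝ) * (t + (d : ℝ)) = (((k₂ : ℤ) * d : ℤ) : ℝ) + (k₂ : ℝ) * t
          push_cast
          ring
      · show su2diag (2 * Real.pi * (k₁ : ℝ) * (t + (d : ℝ))) =
          su2diag (2 * Real.pi * (k₁ : ℝ) * t)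
        rw [show 2 * Real.pi * (k₁ : ℝ) * (t + (d : ℝ)) =
          2 * Real.pi * (k₁ : ℝ) * t + (((k₁ : ℤ) * d : ℤ) : ℝ) * (2 * Real.pi) by
            push_cast; ring]
        rw [su2diag_period]
    -- the test map G on H
    set G : ↥H → ℝ × ℝ × SU2 := fun p =>
      ((p : Heis ℝ × SU2).1.x, (p : Heis ℝ × SU2).1.y,
        su2diag (2 * Real.pi * (k₁ : ℝ) * (p : Heis ℝ × SU2).1.z / (k₂ : ℝ)) *
          ((p : Heis ℝ × SU2).2)⁻¹) with hGdef
    have hGcont : Continuous G := by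
      refine Continuous.prodMk ?_ (Continuous.prodMk ?_ ?_)
      · exact continuous_heis_x.comp (continuous_fst.comp continuous_subtype_val)
      · exact continuous_heis_y.comp (continuous_fst.comp continuous_subtype_val)
      · refine Continuous.mul ?_ ?_
        · exact continuous_su2diag.comp
            ((continuous_const.mul
              (continuous_heis_z.comp (continuous_fst.comp continuous_subtype_val))).div_const _)
        · exact (continuous_snd.comp continuous_subtype_val).inv
    -- Sr : preimage of range φ inside H
    set Sr : Set ↥H := Subtype.val ⁻¹' Set.range (fun t : ℝ =>
      ((⟨0, 0, (k₂ : ℝ) * t⟩ : Heis ℝ), su2diag (2 * Real.pi * (k₁ : ℝ) * t))) with hSrDef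
    have hint0 : ∀ a : ℤ, (a : ℝ) ∈ Set.Ioo (-(1/2) : ℝ) (1/2) → (a : ℝ) = 0 := by
      rintro a ⟨h1, h2⟩
      have ha0 : a = 0 := by
        by_contra h0
        have h1' : (1 : ℝ) ≤ |(a : ℝ)| := by
          rw [← Int.cast_abs]
          exact_mod_cast Int.one_le_abs h0
        have habs : |(a : ℝ)| < 1/2 := abs_lt.2 ⟨h1, h2⟩
        linarith
      rw [ha0, Int.cast_zero]
    have hA : G ⁻¹' (Set.Ioo (-(1/2) : ℝ) (1/2) ×ˢ (Set.Ioo (-(1/2) : ℝ) (1/2) ×ˢ Tbadᶜ)) ⊆ Sr := by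
      rintro p ⟨hx, hy, hT⟩
      have hpH : (p : Heis ℝ × SU2) ∈ Hset k₁ k₂ := hH ▸ p.2
      obtain ⟨a, b, c, t, hpeq⟩ := hpH
      have hxa : (p : Heis ℝ × SU2).1.x = (a : ℝ) := by rw [hpeq]
      have hyb : (p : Heis ℝ × SU2).1.y = (b : ℝ) := by rw [hpeq]
      refine hrange _ (hH ▸ p.2) ?_ ?_ hT
      · rw [hxa]; exact hint0 a (hxa ▸ hx)
      · rw [hyb]; exact hint0 b (hyb ▸ hy)
    have hB : Sr ⊆ G ⁻¹' ({(0:ℝ)} ×ˢ ({(0:ℝ)} ×ˢ {(1:SU2)})) := by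
      rintro p ⟨t, hpt⟩
      have hx : (p : Heis ℝ × SU2).1.x = 0 := by rw [← hpt]
      have hy : (p : Heis ℝ × SU2).1.y = 0 := by rw [← hpt]
      have hz : (p : Heis ℝ × SU2).1.z = (k₂ : ℝ) * t := by rw [← hpt]
      have h2 : (p : Heis ℝ × SU2).2 = su2diag (2 * Real.pi * (k₁ : ℝ) * t) := by rw [← hpt]
      refine ⟨hx, hy, ?_⟩
      show su2diag _ * _ = 1
      rw [hz, h2, mul_div_assoc, mul_div_cancel_left₀ _ hk₂', mul_inv_cancel]
    have hC : G ⁻¹' ({(0:ℝ)} ×ˢ ({(0:ℝ)} ×ˢ {(1:SU2)})) ⊆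
        G ⁻¹' (Set.Ioo (-(1/2) : ℝ) (1/2) ×ˢ (Set.Ioo (-(1/2) : ℝ) (1/2) ×ˢ Tbadᶜ)) := by
      rintro p ⟨hx, hy, h1⟩
      rw [Set.mem_singleton_iff] at hx hy h1
      refine ⟨by rw [hx]; constructor <;> norm_num, by rw [hy]; constructor <;> norm_num, ?_⟩
      show _ ∉ Tbad
      rw [h1]
      exact h1nT
    have hSrClopen : IsClopen Sr := by
      constructor
      · have : Sr = G ⁻¹' ({(0:ℝ)} ×ˢ ({(0:ℝ)} ×ˢ {(1:SU2)})) :=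
          Set.Subset.antisymm hB (fun p hp => hA (hC hp))
        rw [this]
        exact (isClosed_singleton.prod (isClosed_singleton.prod isClosed_singleton)).preimage
          hGcont
      · have : Sr = G ⁻¹' (Set.Ioo (-(1/2) : ℝ) (1/2) ×ˢ (Set.Ioo (-(1/2) : ℝ) (1/2) ×ˢ Tbadᶜ)) :=
          Set.Subset.antisymm (fun p hp => hC (hB hp)) hA
        rw [this]
        exact (isOpen_Ioo.prod (isOpen_Ioo.prod hTbadFin.isClosed.isOpen_compl)).preimage hGcont
    have h1Sr : (1 : ↥H) ∈ Sr := ⟨0, hφ1⟩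
    have hccSr : connectedComponent (1 : ↥H) ⊆ Sr :=
      hSrClopen.connectedComponent_subset h1Sr
    -- the lifted map is continuous with connected range
    have hconnsub : Set.range (fun t : ℝ => (⟨_, hmemH t⟩ : ↥H)) ⊆
        connectedComponent (1 : ↥H) := by
      refine IsPreconnected.subset_connectedComponent ?_ ⟨0, Subtype.ext hφ1⟩
      exact (isPreconnected_range (hcont.subtype_mk hmemH))
    apply Set.Subset.antisymm
    · rintro x ⟨t, rfl⟩
      exact ⟨⟨_, hmemH t⟩, hconnsub ⟨t, rfl⟩, rfl⟩
    · rintro x ⟨p, hp, rfl⟩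
      exact hccSr hp
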